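/- Let N ∈ ℕ with N ≥ 4, 0 < ε ≤ 1/32, and k₀ ∈ ℤ with 3N ≤ k₀ ≤ 5N. Then for any real θ with ε/N ≤ θ ≤ 1/2, the number of integers k with k₀ ≤ k < k₀ + N and ε/2 < {(2k+1)θ} < 1 − ε/2 is at least N/8. -/

import Mathlib

/-- If the fractional parts of `x` and `y` are both within `ε/2` of the integers,
then the fractional part of `y - x` is within `ε` of the integers. -/
lemma stmt7_bad_pair {ε x y : ℝ} (hε : 0 < ε) (hε1 : ε ≤ 1/32)
    (hx : Int.fract x ≤ ε/2 ∨ 1 - ε/2 ≤ Int.fract x)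
    (hy : Int.fract y ≤ ε/2 ∨ 1 - ε/2 ≤ Int.fract y) :
    Int.fract (y - x) ≤ ε ∨ 1 - ε ≤ Int.fract (y - x) := by
  have hkey : Int.fract (y - x) = Int.fract (Int.fract y - Int.fract x) := by
    have h1 : y - x = (Int.fract y - Int.fract x) + ((⌊y⌋ - ⌊x⌋ : ℤ) : ℝ) := by
      rw [Int.fract, Int.fract]; push_cast; ring
    rw [h1, Int.fract_add_intCast]
  have hx0 := Int.fract_nonneg x
  have hx1 := Int.fract_lt_one x
  have hy0 := Int.fract_nonneg y
  have hy1 := Int.fract_lt_one y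
  rw [hkey]
  rcases le_or_gt 0 (Int.fract y - Int.fract x) with h | h
  · rw [Int.fract_eq_self.mpr ⟨h, by linarith⟩]
    rcases hx with hx | hx <;> rcases hy with hy | hy <;>
      first | (left; linarith) | (right; linarith)
  · have h2 : Int.fract (Int.fract y - Int.fract x)
        = Int.fract y - Int.fract x + 1 := by
      have e1 : Int.fract (Int.fract y - Int.fract x)
          = Int.fract (Int.fract y - Int.fract x + 1) := by
        rw [show Int.fract y - Int.fract x + 1
            = (Int.fract y - Int.fract x) + ((1 : ℤ) : ℝ) by push_cast; ring,
          Int.fract_add_intCast]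
      rw [e1]
      exact Int.fract_eq_self.mpr ⟨by linarith, by linarith⟩
    rw [h2]
    rcases hx with hx | hx <;> rcases hy with hy | hy <;>
      first | (left; linarith) | (right; linarith)

/-- Counting lemma: if every bad `k` (with `k + m` still in the window) is followed by
a good `k + m`, then the good count is at least `(N - m) / 2`. -/
lemma stmt7_count (N : ℕ) (k₀ : ℤ) (P : ℤ → Prop) [DecidablePred P] (m : ℕ) (hm : m ≤ N)
    (hpair : ∀ k : ℤ, k₀ ≤ k → k + m < k₀ + N → ¬ P k → P (k + m)) :
    (N : ℤ) ≤ 2 * ((Finset.Ico k₀ (k₀ + N)).filter P).card + m := by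
  classical
  have hWcard : (Finset.Ico k₀ (k₀ + (N:ℤ))).card = N := by simp [Int.card_Ico]
  have hsplit : ((Finset.Ico k₀ (k₀ + (N:ℤ))).filter P).card
      + ((Finset.Ico k₀ (k₀ + (N:ℤ))).filter (fun k => ¬ P k)).card = N := by
    rw [Finset.card_filter_add_card_filter_not, hWcard]
  have h1 : ((Finset.Ico k₀ (k₀ + (N:ℤ) - m)).filter (fun k => ¬ P k)).card
      ≤ ((Finset.Ico k₀ (k₀ + (N:ℤ))).filter P).card := by
    apply Finset.card_le_card_of_injOn (fun k => k + (m:ℤ))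
    · intro k hk
      simp only [Finset.mem_coe, Finset.mem_filter, Finset.mem_Ico] at hk
      simp only [Finset.mem_coe, Finset.mem_filter, Finset.mem_Ico]
      refine ⟨⟨by omega, by omega⟩, hpair k hk.1.1 (by omega) hk.2⟩
    · intro a _ b _ hab
      simpa using hab
  have h2 : ((Finset.Ico k₀ (k₀ + (N:ℤ))).filter (fun k => ¬ P k)).card
      ≤ ((Finset.Ico k₀ (k₀ + (N:ℤ) - m)).filter (fun k => ¬ P k)).card + m := by
    have hsub : ((Finset.Ico k₀ (k₀ + (N:ℤ))).filter (fun k => ¬ P k))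
        ⊆ ((Finset.Ico k₀ (k₀ + (N:ℤ) - m)).filter (fun k => ¬ P k))
          ∪ Finset.Ico (k₀ + (N:ℤ) - m) (k₀ + N) := by
      intro k hk
      simp only [Finset.mem_filter, Finset.mem_Ico] at hk
      simp only [Finset.mem_union, Finset.mem_filter, Finset.mem_Ico]
      rcases lt_or_ge k (k₀ + (N:ℤ) - m) with h | h
      · exact Or.inl ⟨⟨hk.1.1, h⟩, hk.2⟩
      · exact Or.inr ⟨h, hk.1.2⟩
    calc ((Finset.Ico k₀ (k₀ + (N:ℤ))).filter (fun k => ¬ P k)).card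
        ≤ (((Finset.Ico k₀ (k₀ + (N:ℤ) - m)).filter (fun k => ¬ P k))
            ∪ Finset.Ico (k₀ + (N:ℤ) - m) (k₀ + N)).card := Finset.card_le_card hsub
      _ ≤ ((Finset.Ico k₀ (k₀ + (N:ℤ) - m)).filter (fun k => ¬ P k)).card
            + (Finset.Ico (k₀ + (N:ℤ) - m) (k₀ + N)).card := Finset.card_union_le _ _
      _ ≤ _ := by
          apply Nat.add_le_add_left
          simp [Int.card_Ico]
  omega

set_option maxHeartbeats 1000000 in
/-- Lemma A.2: in any window `k₀ ≤ k < k₀ + N` with `3N ≤ k₀ ≤ 5N`, at least `N/8`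
of the fractional parts `{(2k+1)θ}` lie in `(ε/2, 1 - ε/2)`. -/
theorem stmt7 (N : ℕ) (hN : 4 ≤ N) (ε : ℝ) (hε : 0 < ε) (hε' : ε ≤ 1 / 32)
    (k₀ : ℤ) (hk₀ : 3 * (N : ℤ) ≤ k₀) (hk₀' : k₀ ≤ 5 * (N : ℤ)) (θ : ℝ)
    (hθ : ε / N ≤ θ) (hθ' : θ ≤ 1 / 2) :
    (N : ℝ) / 8 ≤
      ({k : ℤ | k₀ ≤ k ∧ k < k₀ + N ∧
        ε / 2 < Int.fract (((2 * k + 1 : ℤ) : ℝ) * θ) ∧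
        Int.fract (((2 * k + 1 : ℤ) : ℝ) * θ) < 1 - ε / 2}.ncard : ℝ) := by
  classical
  have hN0 : (0:ℝ) < N := by positivity
  have hN4 : (4:ℝ) ≤ N := by exact_mod_cast hN
  set P : ℤ → Prop := fun k => ε / 2 < Int.fract (((2 * k + 1 : ℤ) : ℝ) * θ) ∧
      Int.fract (((2 * k + 1 : ℤ) : ℝ) * θ) < 1 - ε / 2 with hP
  have hset : {k : ℤ | k₀ ≤ k ∧ k < k₀ + N ∧
        ε / 2 < Int.fract (((2 * k + 1 : ℤ) : ℝ) * θ) ∧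
        Int.fract (((2 * k + 1 : ℤ) : ℝ) * θ) < 1 - ε / 2}
      = ↑((Finset.Ico k₀ (k₀ + (N:ℤ))).filter P) := by
    ext k
    simp only [Set.mem_setOf_eq, Finset.coe_filter, Finset.mem_Ico, hP, Set.mem_setOf_eq]
    tauto
  rw [hset, Set.ncard_coe_finset]
  by_cases hc1 : 1 - ε ≤ 2 * θ ∧ 12 * (N:ℝ) * (1 - 2 * θ) < 1 - ε
  · -- every k in the window is good
    obtain ⟨hA, hB⟩ := hc1
    have hs0 : (0:ℝ) ≤ 1 - 2 * θ := by linarith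
    have hgood : ∀ k ∈ Finset.Ico k₀ (k₀ + (N:ℤ)), P k := by
      intro k hk
      simp only [Finset.mem_Ico] at hk
      have hk1 : (0:ℝ) ≤ ((2 * k + 1 : ℤ) : ℝ) := by
        have h3 : (3 * (N:ℤ) : ℝ) ≤ (k : ℝ) := by exact_mod_cast hk₀.trans hk.1
        push_cast at h3 ⊢
        linarith
      have hk2 : ((2 * k + 1 : ℤ) : ℝ) ≤ 12 * N := by
        have h6 : k ≤ 6 * (N:ℤ) - 1 := by omega
        have h6' : (k : ℝ) ≤ 6 * N - 1 := by exact_mod_cast h6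
        push_cast
        linarith
      have ha0 : 0 ≤ ((2 * k + 1 : ℤ) : ℝ) * (1 - 2 * θ) / 2 := by positivity
      have ha1 : ((2 * k + 1 : ℤ) : ℝ) * (1 - 2 * θ) < 1 - ε := by
        calc ((2 * k + 1 : ℤ) : ℝ) * (1 - 2 * θ) ≤ 12 * N * (1 - 2 * θ) := by nlinarith
          _ < 1 - ε := hB
      have hrw : ((2 * k + 1 : ℤ) : ℝ) * θ
          = (k : ℝ) + (1/2 - ((2 * k + 1 : ℤ) : ℝ) * (1 - 2 * θ) / 2) := by
        push_cast
        ring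
      have hfr : Int.fract (((2 * k + 1 : ℤ) : ℝ) * θ)
          = 1/2 - ((2 * k + 1 : ℤ) : ℝ) * (1 - 2 * θ) / 2 := by
        rw [hrw, Int.fract_intCast_add]
        exact Int.fract_eq_self.mpr ⟨by linarith, by linarith⟩
      exact ⟨by rw [hfr]; linarith, by rw [hfr]; linarith⟩
    have heq : (Finset.Ico k₀ (k₀ + (N:ℤ))).filter P = Finset.Ico k₀ (k₀ + (N:ℤ)) :=
      Finset.filter_true_of_mem hgood
    rw [heq]
    have hcard : (Finset.Ico k₀ (k₀ + (N:ℤ))).card = N := by simp [Int.card_Ico]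
    rw [hcard]
    linarith
  · -- There exists a good shift m
    have hkey : ∃ m : ℕ, 1 ≤ m ∧ (m : ℝ) ≤ 3 * N / 4 ∧
        ε < Int.fract (2 * (m:ℝ) * θ) ∧ Int.fract (2 * (m:ℝ) * θ) < 1 - ε := by
      by_cases hA : 1 - ε ≤ 2 * θ
      · -- θ close to 1/2, and 12 N (1-2θ) ≥ 1 - ε
        have hB : 1 - ε ≤ 12 * (N:ℝ) * (1 - 2 * θ) := by
          by_contra hcon
          push_neg at hcon
          exact hc1 ⟨hA, hcon⟩
        have hsε : 1 - 2 * θ ≤ ε := by linarith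
        have hs0 : 0 < 1 - 2 * θ := by nlinarith
        obtain ⟨m, hm_def⟩ : ∃ m : ℕ, m = ⌊ε / (1 - 2 * θ)⌋₊ + 1 := ⟨_, rfl⟩
        have hm1 : 1 ≤ m := by omega
        have hml : ε / (1 - 2 * θ) < (m:ℝ) := by
          rw [hm_def]
          push_cast
          linarith [Nat.lt_floor_add_one (ε / (1 - 2 * θ))]
        have hmu : (m:ℝ) ≤ ε / (1 - 2 * θ) + 1 := by
          rw [hm_def]
          push_cast
          linarith [Nat.floor_le (show (0:ℝ) ≤ ε / (1 - 2 * θ) by positivity)]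
        have hms1 : ε < (m:ℝ) * (1 - 2 * θ) := by
          rw [div_lt_iff₀ hs0] at hml
          linarith
        have hms2 : (m:ℝ) * (1 - 2 * θ) ≤ ε + (1 - 2 * θ) := by
          have h := mul_le_mul_of_nonneg_right hmu hs0.le
          rwa [add_mul, div_mul_cancel₀ ε (ne_of_gt hs0), one_mul] at h
        have hmb : (m:ℝ) ≤ 3 * N / 4 := by
          have hd1 : ε / (1 - 2 * θ) ≤ 12 * N * ε / (1 - ε) := by
            rw [div_le_div_iff₀ hs0 (by linarith)]
            nlinarith [hB, hε.le]
          have hd2 : 12 * (N:ℝ) * ε / (1 - ε) ≤ 12 * N / 31 := by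
            rw [div_le_div_iff₀ (by linarith) (by norm_num)]
            nlinarith [hN0, hε']
          linarith
        have hms3 : (m:ℝ) * (1 - 2 * θ) < 1 := by linarith
        have hfr : Int.fract (2 * (m:ℝ) * θ) = 1 - (m:ℝ) * (1 - 2 * θ) := by
          have hrw : 2 * (m:ℝ) * θ = ((m:ℤ):ℝ) + (-((m:ℝ) * (1 - 2 * θ))) := by
            push_cast
            ring
          rw [hrw, Int.fract_intCast_add]
          have hfr2 : Int.fract ((m:ℝ) * (1 - 2 * θ)) = (m:ℝ) * (1 - 2 * θ) :=
            Int.fract_eq_self.mpr ⟨by positivity, hms3⟩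
          rw [Int.fract_neg (by rw [hfr2]; exact (hε.trans hms1).ne'), hfr2]
        exact ⟨m, hm1, hmb, by rw [hfr]; linarith, by rw [hfr]; linarith⟩
      · push_neg at hA
        by_cases hB : ε < 2 * θ
        · -- m = 1 works
          have hfr : Int.fract (2 * ((1:ℕ):ℝ) * θ) = 2 * θ := by
            rw [show 2 * ((1:ℕ):ℝ) * θ = 2 * θ by norm_num]
            exact Int.fract_eq_self.mpr ⟨by linarith, by linarith⟩
          exact ⟨1, le_refl 1, by push_cast; linarith, by rw [hfr]; linarith,
            by rw [hfr]; linarith⟩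
        · push_neg at hB
          -- 2θ ≤ ε : small θ case
          have hθ0 : 0 < θ := lt_of_lt_of_le (by positivity) hθ
          have h2θ : (0:ℝ) < 2 * θ := by linarith
          obtain ⟨m, hm_def⟩ : ∃ m : ℕ, m = ⌊ε / (2 * θ)⌋₊ + 1 := ⟨_, rfl⟩
          have hm1 : 1 ≤ m := by omega
          have hml : ε / (2 * θ) < (m:ℝ) := by
            rw [hm_def]
            push_cast
            linarith [Nat.lt_floor_add_one (ε / (2 * θ))]
          have hmu : (m:ℝ) ≤ ε / (2 * θ) + 1 := by
            rw [hm_def]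
            push_cast
            linarith [Nat.floor_le (show (0:ℝ) ≤ ε / (2 * θ) by positivity)]
          have hms1 : ε < (m:ℝ) * (2 * θ) := by
            rw [div_lt_iff₀ h2θ] at hml
            linarith
          have hms2 : (m:ℝ) * (2 * θ) ≤ ε + 2 * θ := by
            have h := mul_le_mul_of_nonneg_right hmu h2θ.le
            rwa [add_mul, div_mul_cancel₀ ε (ne_of_gt h2θ), one_mul] at h
          have hmb : (m:ℝ) ≤ 3 * N / 4 := by
            have hNθ : ε ≤ θ * N := (div_le_iff₀ hN0).mp hθ
            have hd1 : ε / (2 * θ) ≤ N / 2 := by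
              rw [div_le_div_iff₀ h2θ (by norm_num)]
              linarith
            linarith
          have hfr : Int.fract (2 * (m:ℝ) * θ) = (m:ℝ) * (2 * θ) := by
            rw [show 2 * (m:ℝ) * θ = (m:ℝ) * (2 * θ) by ring]
            exact Int.fract_eq_self.mpr ⟨by positivity, by linarith⟩
          exact ⟨m, hm1, hmb, by rw [hfr]; linarith, by rw [hfr]; linarith⟩
    obtain ⟨m, hm1, hm2, hf1, hf2⟩ := hkey
    have hmN : m ≤ N := by
      by_contra h
      push_neg at h
      have : (N:ℝ) < m := by exact_mod_cast h
      linarith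
    have hpair : ∀ k : ℤ, k₀ ≤ k → k + m < k₀ + N → ¬ P k → P (k + m) := by
      intro k hk1 hk2 hbad
      by_contra hbad2
      simp only [hP, not_and_or, not_lt] at hbad hbad2
      have hx : Int.fract (((2 * k + 1 : ℤ) : ℝ) * θ) ≤ ε/2 ∨
          1 - ε/2 ≤ Int.fract (((2 * k + 1 : ℤ) : ℝ) * θ) := by tauto
      have hy : Int.fract (((2 * (k + m) + 1 : ℤ) : ℝ) * θ) ≤ ε/2 ∨
          1 - ε/2 ≤ Int.fract (((2 * (k + m) + 1 : ℤ) : ℝ) * θ) := by tauto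
      have hd := stmt7_bad_pair hε hε' hx hy
      have hrw : ((2 * (k + m) + 1 : ℤ) : ℝ) * θ - ((2 * k + 1 : ℤ) : ℝ) * θ
          = 2 * (m:ℝ) * θ := by push_cast; ring
      rw [hrw] at hd
      rcases hd with hd | hd <;> linarith
    have hcount := stmt7_count N k₀ P m hmN hpair
    have hcard : ((N:ℝ)) ≤ 2 * (((Finset.Ico k₀ (k₀ + (N:ℤ))).filter P).card : ℝ) + m := by
      exact_mod_cast hcount
    linarith
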